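/- Let λ be a nonreal complex number, B = J_n(λ) ⊕ J_n(conj λ), and H = Q_{2n}. Then for any positive integer m there exists an H-selfadjoint matrix A with A^m = B. -/

import Mathlib

open Matrix

def jordanBlock (n : ℕ) (lam : ℂ) : Matrix (Fin n) (Fin n) ℂ :=
  fun i j => if (i : ℕ) = (j : ℕ) then lam else if (i : ℕ) + 1 = (j : ℕ) then 1 else 0

def backQ (n : ℕ) : Matrix (Fin n) (Fin n) ℂ :=
  fun i j => if (i : ℕ) + (j : ℕ) + 1 = n then 1 else 0

def dsum {n : ℕ} (A B : Matrix (Fin n) (Fin n) ℂ) :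
    Matrix (Fin (n + n)) (Fin (n + n)) ℂ :=
  Matrix.reindex finSumFinEquiv finSumFinEquiv (Matrix.fromBlocks A 0 0 B)

/-! ### Hensel lifting of m-th roots of `1 + nilpotent` -/

lemma pow_add_expand {R : Type*} [CommRing R] (s d : R) (m : ℕ) :
    ∃ c, (s + d) ^ (m + 1) = s ^ (m + 1) + ((m : R) + 1) * s ^ m * d + d ^ 2 * c := by
  induction m with
  | zero => exact ⟨0, by ring⟩
  | succ k ih =>
    obtain ⟨c, hc⟩ := ih
    refine ⟨c * s + ((k : R) + 1) * s ^ k + d * c, ?_⟩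
    have : (s + d) ^ (k + 1 + 1) = (s + d) ^ (k + 1) * (s + d) := by ring
    rw [this, hc]
    push_cast
    ring

lemma hensel_step {R : Type*} [CommRing R] [Algebra ℂ R] {m : ℕ} (hm : 0 < m) {x : R}
    (hx : IsNilpotent x) :
    ∀ t : ℕ, ∃ s c : R, IsUnit s ∧ 1 + x = s ^ m + x ^ (2 ^ t) * c := by
  intro t
  induction t with
  | zero => exact ⟨1, 1, isUnit_one, by simp⟩
  | succ t ih =>
    obtain ⟨s, c, hs, h⟩ := ih
    obtain ⟨m', rfl⟩ : ∃ m', m = m' + 1 := ⟨m - 1, (Nat.succ_pred_eq_of_pos hm).symm⟩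
    have hmu : IsUnit ((m' : R) + 1) := by
      have h1 : ((m' : ℂ) + 1) ≠ 0 := Nat.cast_add_one_ne_zero m'
      have h2 : ((m' : R) + 1) = algebraMap ℂ R ((m' : ℂ) + 1) := by
        simp [map_add, map_natCast]
      rw [h2]
      exact (isUnit_iff_ne_zero.mpr h1).map _
    have hU : IsUnit (((m' : R) + 1) * s ^ m') := hmu.mul (hs.pow _)
    set v : R := ↑hU.unit⁻¹ with hv
    have hvv : (((m' : R) + 1) * s ^ m') * v = 1 := hU.mul_val_inv
    set d : R := x ^ (2 ^ t) * c * v with hd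
    obtain ⟨c₂, hc₂⟩ := pow_add_expand s d m'
    have key : (s + d) ^ (m' + 1) = s ^ (m' + 1) + x ^ (2 ^ t) * c + d ^ 2 * c₂ := by
      rw [hc₂]
      have : ((m' : R) + 1) * s ^ m' * d = x ^ (2 ^ t) * c * ((((m' : R) + 1) * s ^ m') * v) := by
        rw [hd]; ring
      rw [this, hvv, mul_one]
    have hd2 : d ^ 2 = x ^ (2 ^ (t + 1)) * (c * v) ^ 2 := by
      rw [hd, show (2:ℕ) ^ (t + 1) = 2 ^ t * 2 from pow_succ 2 t, pow_mul]
      ring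
    refine ⟨s + d, -((c * v) ^ 2 * c₂), ?_, ?_⟩
    · have hpow : (s + d) ^ (m' + 1) = 1 + (x - x ^ (2 ^ (t + 1)) * (-((c * v) ^ 2 * c₂))) := by
        rw [key, hd2, ← h]
        ring
      have hnil : IsNilpotent (x - x ^ (2 ^ (t + 1)) * (-((c * v) ^ 2 * c₂))) := by
        refine Commute.isNilpotent_sub (Commute.all _ _) hx ?_
        refine Commute.isNilpotent_mul_right (Commute.all _ _) ?_
        obtain ⟨N, hN⟩ := hx
        exact ⟨N, by rw [← pow_mul, mul_comm, pow_mul, hN,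
          zero_pow (by positivity : (0:ℕ) < 2 ^ (t + 1)).ne']⟩
      have : IsUnit ((s + d) ^ (m' + 1)) := by
        rw [hpow]
        exact hnil.isUnit_one_add
      exact (isUnit_pow_iff (Nat.succ_ne_zero m')).mp this
    · rw [key, hd2, ← h]
      ring

lemma hensel_root {R : Type*} [CommRing R] [Algebra ℂ R] {m : ℕ} (hm : 0 < m) {x : R}
    (hx : IsNilpotent x) : ∃ s : R, s ^ m = 1 + x := by
  obtain ⟨k, hk⟩ := hx
  obtain ⟨s, c, _, h⟩ := hensel_step hm ⟨k, hk⟩ k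
  have hz : x ^ (2 ^ k) = 0 :=
    pow_eq_zero_of_le (le_of_lt (Nat.lt_two_pow_self (n := k))) hk
  rw [hz, zero_mul, add_zero] at h
  exact ⟨s, h.symm⟩

/-- m-th root of `1 + a` for `a` nilpotent in any (possibly noncommutative) ℂ-algebra. -/
lemma alg_root {A : Type*} [Ring A] [Algebra ℂ A] {n m : ℕ} (hm : 0 < m) {a : A}
    (ha : a ^ n = 0) : ∃ s : A, s ^ m = 1 + a := by
  classical
  set I : Ideal (Polynomial ℂ) := Ideal.span {(Polynomial.X : Polynomial ℂ) ^ n} with hI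
  set R := Polynomial ℂ ⧸ I with hR
  have hxnil : IsNilpotent (Ideal.Quotient.mk I (Polynomial.X)) := by
    refine ⟨n, ?_⟩
    rw [← map_pow, Ideal.Quotient.eq_zero_iff_mem]
    exact Ideal.subset_span rfl
  obtain ⟨s, hs⟩ := hensel_root (R := R) hm hxnil
  obtain ⟨p, rfl⟩ := Ideal.Quotient.mk_surjective s
  have hmem : p ^ m - (1 + Polynomial.X) ∈ I := by
    rw [← Ideal.Quotient.eq_zero_iff_mem, map_sub, map_pow, hs, map_add, _root_.map_one, sub_self]
  rw [hI, Ideal.mem_span_singleton] at hmem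
  obtain ⟨q, hq⟩ := hmem
  have hpm : p ^ m = 1 + Polynomial.X + Polynomial.X ^ n * q := by
    have := hq
    linear_combination hq
  refine ⟨Polynomial.aeval a p, ?_⟩
  rw [← map_pow, hpm]
  simp [_root_.map_mul, _root_.map_one, map_add, map_pow, Polynomial.aeval_X, ha]

/-! ### The nilpotent Jordan block -/

lemma jordan_nilp_entry (n : ℕ) : ∀ (k : ℕ) (i j : Fin n),
    (j : ℕ) < (i : ℕ) + k → ((jordanBlock n 0) ^ k) i j = 0 := by
  intro k
  induction k with
  | zero =>
    intro i j h
    rw [pow_zero, Matrix.one_apply]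
    have : i ≠ j := by
      intro e; subst e; omega
    simp [this]
  | succ k ih =>
    intro i j h
    rw [pow_succ', Matrix.mul_apply]
    refine Finset.sum_eq_zero fun l _ => ?_
    by_cases h1 : (i : ℕ) = (l : ℕ)
    · simp [jordanBlock, h1]
    · by_cases h2 : (i : ℕ) + 1 = (l : ℕ)
      · have : ((jordanBlock n 0) ^ k) l j = 0 := ih l j (by omega)
        rw [this, mul_zero]
      · simp [jordanBlock, h1, h2]

lemma jordan_nilp (n : ℕ) : (jordanBlock n 0) ^ n = 0 := by
  ext i j
  rw [jordan_nilp_entry n n i j (by omega)]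
  simp

lemma jordan_decomp (n : ℕ) (lam : ℂ) :
    jordanBlock n lam = lam • (1 : Matrix (Fin n) (Fin n) ℂ) + jordanBlock n 0 := by
  ext i j
  simp only [Matrix.add_apply, Matrix.smul_apply, Matrix.one_apply, jordanBlock, smul_eq_mul]
  rcases eq_or_ne (i : ℕ) (j : ℕ) with h | h
  · have : i = j := Fin.ext h
    subst this
    simp
  · have : i ≠ j := fun e => h (by rw [e])
    simp [h, this]

lemma jordan_root (n m : ℕ) (hm : 0 < m) (lam : ℂ) (hlam : lam ≠ 0) :
    ∃ X : Matrix (Fin n) (Fin n) ℂ, X ^ m = jordanBlock n lam := by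
  obtain ⟨μ, hμ⟩ := IsAlgClosed.exists_pow_nat_eq lam hm
  have hN : (lam⁻¹ • jordanBlock n 0) ^ n = 0 := by
    rw [smul_pow, jordan_nilp, smul_zero]
  obtain ⟨s, hs⟩ := alg_root hm hN
  refine ⟨μ • s, ?_⟩
  rw [smul_pow, hs, hμ, smul_add, jordan_decomp n lam, smul_smul,
    mul_inv_cancel₀ hlam, one_smul]

/-! ### backQ lemmas -/

lemma backQ_apply_rev {k : ℕ} (i j : Fin k) :
    backQ k i j = if i.rev = j then 1 else 0 := by
  unfold backQ
  congr 1
  simp only [eq_iff_iff, Fin.ext_iff, Fin.val_rev]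
  omega

lemma backQ_apply_rev' {k : ℕ} (i j : Fin k) :
    backQ k i j = if i = j.rev then 1 else 0 := by
  rw [backQ_apply_rev]
  congr 1
  simp only [eq_iff_iff, Fin.ext_iff, Fin.val_rev]
  omega

lemma backQ_mul {k : ℕ} (M : Matrix (Fin k) (Fin k) ℂ) (i j : Fin k) :
    (backQ k * M) i j = M i.rev j := by
  rw [Matrix.mul_apply]
  have : ∀ l, backQ k i l * M l j = if i.rev = l then M l j else 0 := by
    intro l
    rw [backQ_apply_rev]
    split_ifs <;> simp
  simp only [this]
  simp

lemma mul_backQ {k : ℕ} (M : Matrix (Fin k) (Fin k) ℂ) (i j : Fin k) :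
    (M * backQ k) i j = M i j.rev := by
  rw [Matrix.mul_apply]
  have : ∀ l, M i l * backQ k l j = if l = j.rev then M i l else 0 := by
    intro l
    rw [backQ_apply_rev']
    split_ifs <;> simp
  simp only [this]
  simp

lemma backQ_mul_backQ (k : ℕ) : backQ k * backQ k = 1 := by
  ext i j
  rw [backQ_mul, backQ_apply_rev, Fin.rev_rev, Matrix.one_apply]

lemma conjQ_pow {p : ℕ} (M : Matrix (Fin p) (Fin p) ℂ) (k : ℕ) :
    (backQ p * M * backQ p) ^ k = backQ p * M ^ k * backQ p := by
  induction k with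
  | zero => rw [pow_zero, pow_zero, mul_one, backQ_mul_backQ]
  | succ k ih =>
    rw [pow_succ, pow_succ, ih]
    calc backQ p * M ^ k * backQ p * (backQ p * M * backQ p)
        = backQ p * M ^ k * (backQ p * backQ p) * (M * backQ p) := by
          simp only [mul_assoc]
      _ = backQ p * (M ^ k * M) * backQ p := by
          rw [backQ_mul_backQ, mul_one]
          simp only [mul_assoc]

lemma revconj (n : ℕ) (lam : ℂ) :
    backQ n * (jordanBlock n lam)ᴴ * backQ n = jordanBlock n (starRingEnd ℂ lam) := by
  ext i j
  rw [mul_backQ, backQ_mul, Matrix.conjTranspose_apply]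
  simp only [jordanBlock, Fin.val_rev]
  have hi := i.isLt
  have hj := j.isLt
  split_ifs with h1 h2 h3 h4 h5 h6 <;>
    first
      | (exfalso; omega)
      | simp

/-! ### dsum lemmas -/

lemma dsum_mul {n : ℕ} (A B C D : Matrix (Fin n) (Fin n) ℂ) :
    dsum A B * dsum C D = dsum (A * C) (B * D) := by
  simp [dsum, Matrix.reindex_apply, Matrix.submatrix_mul_equiv, Matrix.fromBlocks_multiply]

lemma dsum_one {n : ℕ} : dsum (1 : Matrix (Fin n) (Fin n) ℂ) 1 = 1 := by
  simp [dsum, Matrix.fromBlocks_one]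

lemma dsum_pow {n : ℕ} (A B : Matrix (Fin n) (Fin n) ℂ) (k : ℕ) :
    (dsum A B) ^ k = dsum (A ^ k) (B ^ k) := by
  induction k with
  | zero => simp [dsum_one]
  | succ k ih => rw [pow_succ, pow_succ, pow_succ, ih, dsum_mul]

lemma dsum_apply_ll {n : ℕ} (A B : Matrix (Fin n) (Fin n) ℂ) (a b : Fin n) :
    dsum A B (Fin.castAdd n a) (Fin.castAdd n b) = A a b := by
  simp only [dsum, Matrix.reindex_apply, Matrix.submatrix_apply,
    finSumFinEquiv_symm_apply_castAdd, Matrix.fromBlocks_apply₁₁]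

lemma dsum_apply_lr {n : ℕ} (A B : Matrix (Fin n) (Fin n) ℂ) (a b : Fin n) :
    dsum A B (Fin.castAdd n a) (Fin.natAdd n b) = 0 := by
  simp only [dsum, Matrix.reindex_apply, Matrix.submatrix_apply,
    finSumFinEquiv_symm_apply_castAdd, finSumFinEquiv_symm_apply_natAdd,
    Matrix.fromBlocks_apply₁₂]
  rfl

lemma dsum_apply_rl {n : ℕ} (A B : Matrix (Fin n) (Fin n) ℂ) (a b : Fin n) :
    dsum A B (Fin.natAdd n a) (Fin.castAdd n b) = 0 := by
  simp only [dsum, Matrix.reindex_apply, Matrix.submatrix_apply,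
    finSumFinEquiv_symm_apply_castAdd, finSumFinEquiv_symm_apply_natAdd,
    Matrix.fromBlocks_apply₂₁]
  rfl

lemma dsum_apply_rr {n : ℕ} (A B : Matrix (Fin n) (Fin n) ℂ) (a b : Fin n) :
    dsum A B (Fin.natAdd n a) (Fin.natAdd n b) = B a b := by
  simp only [dsum, Matrix.reindex_apply, Matrix.submatrix_apply,
    finSumFinEquiv_symm_apply_natAdd, Matrix.fromBlocks_apply₂₂]

lemma rev_castAdd {n : ℕ} (a : Fin n) :
    (Fin.castAdd n a).rev = Fin.natAdd n a.rev := by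
  ext
  simp only [Fin.val_rev, Fin.coe_castAdd, Fin.coe_natAdd]
  omega

lemma rev_natAdd {n : ℕ} (a : Fin n) :
    (Fin.natAdd n a).rev = Fin.castAdd n a.rev := by
  ext
  simp only [Fin.val_rev, Fin.coe_castAdd, Fin.coe_natAdd]
  omega

theorem exists_H_selfadjoint_root_nonreal_blocks (n m : ℕ) (hm : 0 < m)
    (lam : ℂ) (hlam : lam.im ≠ 0) :
    ∃ A : Matrix (Fin (n + n)) (Fin (n + n)) ℂ,
      backQ (n + n) * A = Aᴴ * backQ (n + n) ∧
      A ^ m = dsum (jordanBlock n lam) (jordanBlock n (starRingEnd ℂ lam)) := by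
  have hlam0 : lam ≠ 0 := fun h => hlam (by rw [h]; simp)
  obtain ⟨X, hX⟩ := jordan_root n m hm lam hlam0
  set Y : Matrix (Fin n) (Fin n) ℂ := backQ n * Xᴴ * backQ n with hY
  have hYapp : ∀ a b : Fin n, Y a b = star (X b.rev a.rev) := by
    intro a b
    rw [hY, mul_backQ, backQ_mul, Matrix.conjTranspose_apply]
  refine ⟨dsum X Y, ?_, ?_⟩
  · ext i j
    rw [backQ_mul, Matrix.mul_apply]
    have : ∀ l, (dsum X Y)ᴴ i l * backQ (n + n) l j
        = if l = j.rev then star (dsum X Y j.rev i) else 0 := by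
      intro l
      rw [backQ_apply_rev']
      split_ifs with h
      · subst h; rw [Matrix.conjTranspose_apply, mul_one]
      · rw [mul_zero]
    rw [Finset.sum_congr rfl fun l _ => this l, Finset.sum_ite_eq' _ (j.rev) _]
    simp only [Finset.mem_univ, if_true]
    -- goal : dsum X Y i.rev j = star (dsum X Y j.rev i)
    induction i using Fin.addCases with
    | left a =>
      induction j using Fin.addCases with
      | left b =>
        rw [rev_castAdd, rev_castAdd, dsum_apply_rl, dsum_apply_rl]
        simp
      | right b =>
        rw [rev_castAdd, rev_natAdd, dsum_apply_rr, dsum_apply_ll, hYapp]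
        simp
    | right a =>
      induction j using Fin.addCases with
      | left b =>
        rw [rev_natAdd, rev_castAdd, dsum_apply_ll, dsum_apply_rr, hYapp]
        simp
      | right b =>
        rw [rev_natAdd, rev_natAdd, dsum_apply_lr, dsum_apply_lr]
        simp
  · rw [dsum_pow, hX, hY, conjQ_pow, ← Matrix.conjTranspose_pow, hX, revconj]
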